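/- Let N be even and consider the N-qubit states |ψ_k⟩ := (|0^{N−k}1^k⟩ + |1^{N−k}0^k⟩)/√2 for k = 0,…,N/2−1, and ρ_N := (2/N) Σ_{k=0}^{N/2−1} |ψ_k⟩⟨ψ_k|. With Z := Σ_{i=1}^N σ^z_i, the quantum Fisher information satisfies F(ρ_N, Z) = (4/3)(N+1)(N+2). -/

import Mathlib

open Matrix Finset

/-- Quantum Fisher information via a spectral decomposition of `ρ`. -/
noncomputable def qfi {ι : Type*} [Fintype ι] (lam : ι → ℝ) (v : ι → ι → ℂ)
    (A : Matrix ι ι ℂ) : ℝ :=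
  2 * ∑ a : ι, ∑ b : ι,
    if 0 < lam a + lam b then
      (lam a - lam b) ^ 2 / (lam a + lam b) * Complex.normSq (star (v a) ⬝ᵥ (A *ᵥ v b))
    else 0

/-- `Z = ∑_i σ^z_i` as a diagonal matrix on the computational basis of `N` qubits. -/
noncomputable def pauliZTotal (N : ℕ) : Matrix (Fin N → Fin 2) (Fin N → Fin 2) ℂ :=
  Matrix.diagonal fun s => ∑ i : Fin N, if s i = 0 then (1 : ℂ) else -1

/-- The basis string `0^{N-k}1^k` (last `k` qubits equal to 1). -/
def baseStr (N k : ℕ) : Fin N → Fin 2 := fun i => if N - k ≤ (i : ℕ) then 1 else 0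

/-- The basis string `1^{N-k}0^k`. -/
def flipStr (N k : ℕ) : Fin N → Fin 2 := fun i => if N - k ≤ (i : ℕ) then 0 else 1

/-- `|ψ_k⟩ = (|0^{N-k}1^k⟩ + |1^{N-k}0^k⟩)/√2`. -/
noncomputable def psiK (N k : ℕ) : (Fin N → Fin 2) → ℂ := fun s =>
  ((if s = baseStr N k then 1 else 0) + (if s = flipStr N k then 1 else 0)) /
    (Real.sqrt 2 : ℂ)

/-- `ρ_N = (2/N) ∑_{k=0}^{N/2-1} |ψ_k⟩⟨ψ_k|`. -/
noncomputable def rhoN (N : ℕ) : Matrix (Fin N → Fin 2) (Fin N → Fin 2) ℂ :=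
  ∑ k ∈ Finset.range (N / 2),
    ((2 / (N : ℝ) : ℝ) : ℂ) • Matrix.vecMulVec (psiK N k) (star (psiK N k))

section Helpers

variable {ι κ : Type*} [Fintype ι]

lemma vmv_mulVec (w x y : ι → ℂ) : vecMulVec w x *ᵥ y = (x ⬝ᵥ y) • w := by
  ext i; simp [vecMulVec, mulVec, dotProduct, Finset.mul_sum, mul_comm, mul_left_comm]

lemma mul_vmv (M : Matrix ι ι ℂ) (w x : ι → ℂ) :
    M * vecMulVec w x = vecMulVec (M *ᵥ w) x := by
  ext i j; simp [vecMulVec, Matrix.mul_apply, mulVec, dotProduct, Finset.sum_mul, mul_assoc]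

lemma vmv_mul (M : Matrix ι ι ℂ) (w x : ι → ℂ) :
    vecMulVec w x * M = vecMulVec w (x ᵥ* M) := by
  ext i j; simp [vecMulVec, Matrix.mul_apply, vecMul, dotProduct, Finset.mul_sum, mul_assoc]

lemma vmv_mul_vmv (w x y z : ι → ℂ) :
    vecMulVec w x * vecMulVec y z = (x ⬝ᵥ y) • vecMulVec w z := by
  ext i j; simp [vecMulVec, Matrix.mul_apply, dotProduct, Finset.sum_mul, Finset.mul_sum]
  congr 1; ext s; ring

lemma mulVec_sumv (M : Matrix ι ι ℂ) (s : Finset κ) (f : κ → ι → ℂ) :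
    M *ᵥ (∑ b ∈ s, f b) = ∑ b ∈ s, M *ᵥ f b := by
  ext i
  simp [mulVec, dotProduct, Finset.mul_sum]
  rw [Finset.sum_comm]

lemma dot_sumv (x : ι → ℂ) (s : Finset κ) (f : κ → ι → ℂ) :
    x ⬝ᵥ (∑ b ∈ s, f b) = ∑ b ∈ s, x ⬝ᵥ f b := by
  simp [dotProduct, Finset.mul_sum]
  rw [Finset.sum_comm]

lemma sum_mulVecv (s : Finset κ) (f : κ → Matrix ι ι ℂ) (x : ι → ℂ) :
    (∑ b ∈ s, f b) *ᵥ x = ∑ b ∈ s, f b *ᵥ x := by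
  ext i
  simp [mulVec, dotProduct, Matrix.sum_apply, Finset.sum_mul]
  rw [Finset.sum_comm]

end Helpers

lemma base_ne_flip {N j k : ℕ} (hpos : 0 < N) (hj : j < N) (hk : k < N) :
    baseStr N j ≠ flipStr N k := by
  intro h
  have := congrFun h ⟨0, hpos⟩
  simp only [baseStr, flipStr] at this
  split_ifs at this <;> first | omega | exact absurd this (by decide)

lemma base_inj {N j k : ℕ} (hj : j < N) (hk : k < N) (h : baseStr N j = baseStr N k) :
    j = k := by
  by_contra hne
  rcases Nat.lt_or_ge j k with hlt | hge
  · have := congrFun h ⟨N - k, by omega⟩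
    simp only [baseStr] at this
    split_ifs at this with h1 h2 h2 <;> simp_all <;> omega
  · have hlt : k < j := by omega
    have := congrFun h ⟨N - j, by omega⟩
    simp only [baseStr] at this
    split_ifs at this with h1 h2 h2 <;> simp_all <;> omega

lemma flip_inj {N j k : ℕ} (hj : j < N) (hk : k < N) (h : flipStr N j = flipStr N k) :
    j = k := by
  have : baseStr N j = baseStr N k := by
    funext i
    have := congrFun h i
    simp only [baseStr, flipStr] at *
    split_ifs at * <;> simp_all
  exact base_inj hj hk this

/-- sandwich of a diagonal matrix between psi's -/
lemma psi_diag_psi {N j k : ℕ} (hpos : 0 < N) (hj : j < N) (hk : k < N) (d : (Fin N → Fin 2) → ℂ) :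
    star (psiK N j) ⬝ᵥ ((Matrix.diagonal d) *ᵥ psiK N k) =
      if j = k then (d (baseStr N k) + d (flipStr N k)) / 2 else 0 := by
  have hsq : ((Real.sqrt 2 : ℝ) : ℂ) * ((Real.sqrt 2 : ℝ) : ℂ) = 2 := by
    rw [← Complex.ofReal_mul, Real.mul_self_sqrt (by norm_num)]
    norm_num
  have hne : ((Real.sqrt 2 : ℝ) : ℂ) ≠ 0 := by
    simp [Real.sqrt_eq_zero']
  have expand : star (psiK N j) ⬝ᵥ ((Matrix.diagonal d) *ᵥ psiK N k) =
      ∑ s, (((if s = baseStr N j then 1 else 0) + (if s = flipStr N j then 1 else 0)) *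
        d s * ((if s = baseStr N k then 1 else 0) + (if s = flipStr N k then 1 else 0))) / 2 := by
    simp only [dotProduct, mulVec_diagonal, psiK, Pi.star_apply, RCLike.star_def, map_div₀,
      map_add, Complex.conj_ofReal]
    refine Finset.sum_congr rfl fun s _ => ?_
    have h1 : (starRingEnd ℂ) (if s = baseStr N j then (1:ℂ) else 0) =
        (if s = baseStr N j then (1:ℂ) else 0) := by split <;> simp
    have h2 : (starRingEnd ℂ) (if s = flipStr N j then (1:ℂ) else 0) =
        (if s = flipStr N j then (1:ℂ) else 0) := by split <;> simp
    rw [h1, h2]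
    field_simp
    rw [sq, hsq]; ring
  rw [expand, ← Finset.sum_div]
  have key : ∑ s, (((if s = baseStr N j then (1:ℂ) else 0) + (if s = flipStr N j then 1 else 0)) *
        d s * ((if s = baseStr N k then 1 else 0) + (if s = flipStr N k then 1 else 0))) =
      if j = k then (d (baseStr N k) + d (flipStr N k)) else 0 := by
    by_cases hjk : j = k
    · subst hjk
      simp only [if_pos rfl]
      rw [Finset.sum_eq_add_of_mem (baseStr N j) (flipStr N j) (mem_univ _) (mem_univ _)
        (base_ne_flip hpos hj hj)]
      · have h1 : flipStr N j ≠ baseStr N j := (base_ne_flip hpos hj hj).symm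
        simp [base_ne_flip hpos hj hj, h1]
      · intro s _ hs
        rcases hs with ⟨h1, h2⟩
        simp [h1, h2]
    · rw [if_neg hjk]
      apply Finset.sum_eq_zero
      intro s _
      have hbb : baseStr N j ≠ baseStr N k := fun h => hjk (base_inj hj hk h)
      have hff : flipStr N j ≠ flipStr N k := fun h => hjk (flip_inj hj hk h)
      have hbf : baseStr N j ≠ flipStr N k := base_ne_flip hpos hj hk
      have hfb : flipStr N j ≠ baseStr N k := fun h => (base_ne_flip hpos hk hj) h.symm
      by_cases e1 : s = baseStr N j <;> by_cases e2 : s = flipStr N j <;>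
        by_cases e3 : s = baseStr N k <;> by_cases e4 : s = flipStr N k <;>
        simp_all <;> ring
  rw [key]
  split <;> simp

lemma card_lt_fin (N m : ℕ) (h : m ≤ N) :
    (Finset.univ.filter (fun i : Fin N => (i : ℕ) < m)).card = m := by
  have : (Finset.univ.filter (fun i : Fin N => (i : ℕ) < m)) =
      Finset.attachFin (Finset.range m) (fun x hx => lt_of_lt_of_le (Finset.mem_range.mp hx) h) := by
    ext i; simp [Finset.mem_attachFin]
  rw [this, Finset.card_attachFin, Finset.card_range]

lemma dz_base {N k : ℕ} (hk : k ≤ N) :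
    (∑ i : Fin N, if baseStr N k i = 0 then (1:ℂ) else -1) = (N : ℂ) - 2 * k := by
  have h1 : ∀ i : Fin N, (if baseStr N k i = 0 then (1:ℂ) else -1) =
      (if (i:ℕ) < N - k then 1 else -1) := by
    intro i; simp only [baseStr]; split_ifs <;> simp_all <;> omega
  simp only [h1]
  rw [Finset.sum_ite, Finset.sum_const, Finset.sum_const]
  rw [card_lt_fin N (N-k) (Nat.sub_le _ _)]
  have h2 : (Finset.univ.filter (fun i : Fin N => ¬ (i:ℕ) < N - k)).card = k := by
    have := Finset.card_filter_add_card_filter_not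
      (s := (Finset.univ : Finset (Fin N))) (p := fun i : Fin N => (i:ℕ) < N - k)
    rw [card_lt_fin N (N-k) (Nat.sub_le _ _), Finset.card_univ, Fintype.card_fin] at this
    omega
  rw [h2]
  simp only [nsmul_eq_mul, mul_one, mul_neg_one, Nat.cast_sub hk]
  ring

lemma dz_flip {N k : ℕ} (hk : k ≤ N) :
    (∑ i : Fin N, if flipStr N k i = 0 then (1:ℂ) else -1) = 2 * k - (N : ℂ) := by
  have h1 : ∀ i : Fin N, (if flipStr N k i = 0 then (1:ℂ) else -1) =
      - (if baseStr N k i = 0 then (1:ℂ) else -1) := by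
    intro i; simp only [baseStr, flipStr]; split_ifs <;> simp_all
  simp only [h1, Finset.sum_neg_distrib]
  rw [dz_base hk]; ring

lemma sum_sq_aux (m : ℕ) : ∑ j ∈ Finset.range m, ((j:ℝ)+1)^2 =
    (m:ℝ)*((m:ℝ)+1)*(2*(m:ℝ)+1)/6 := by
  induction m with
  | zero => simp
  | succ n ih => rw [Finset.sum_range_succ, ih]; push_cast; ring

/-- for even `N > 0`, the quantum Fisher information of `ρ_N` with respect
to `Z = ∑_i σ^z_i` (computed from any spectral decomposition of `ρ_N`) is
`F(ρ_N, Z) = (4/3)(N+1)(N+2)`. -/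
theorem qfi_rhoN (N : ℕ) (hN : Even N) (hpos : 0 < N)
    (lam : (Fin N → Fin 2) → ℝ) (v : (Fin N → Fin 2) → (Fin N → Fin 2) → ℂ)
    (hortho : ∀ a b, star (v a) ⬝ᵥ v b = if a = b then (1 : ℂ) else 0)
    (hlam : ∀ a, 0 ≤ lam a)
    (hdec : rhoN N = ∑ a, (lam a : ℂ) • Matrix.vecMulVec (v a) (star (v a))) :
    qfi lam v (pauliZTotal N) = (4 / 3) * ((N : ℝ) + 1) * ((N : ℝ) + 2) := by
  classical
  obtain ⟨m, hm⟩ := hN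
  have hNm : N = 2 * m := by omega
  have hm0 : 0 < m := by omega
  have hhalf : N / 2 = m := by omega
  set c : ℝ := 2 / (N : ℝ) with hc
  have hcpos : 0 < c := by
    apply div_pos (by norm_num)
    exact_mod_cast hpos
  have hcne : c ≠ 0 := ne_of_gt hcpos
  have hcCne : (c : ℂ) ≠ 0 := by exact_mod_cast hcne
  set Z := pauliZTotal N with hZ
  set ρ := rhoN N with hρ
  -- range bound
  have hkN : ∀ k, k < N / 2 → k < N := fun k hk => lt_of_lt_of_le hk (Nat.div_le_self _ _)
  -- completeness
  have hcomp : ∑ a, vecMulVec (v a) (star (v a)) = (1 : Matrix (Fin N → Fin 2) (Fin N → Fin 2) ℂ) := by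
    set W : Matrix (Fin N → Fin 2) (Fin N → Fin 2) ℂ := Matrix.of fun s a => v a s with hW
    have hWW : Wᴴ * W = 1 := by
      ext a b
      have := hortho a b
      simp only [Matrix.mul_apply, conjTranspose_apply, hW, Matrix.of_apply, Matrix.one_apply]
      simpa [dotProduct] using this
    have hWW' : W * Wᴴ = 1 := mul_eq_one_comm.mpr hWW
    ext s t
    have h2 : (W * Wᴴ) s t = (1 : Matrix (Fin N → Fin 2) (Fin N → Fin 2) ℂ) s t := by rw [hWW']
    simp only [Matrix.mul_apply, conjTranspose_apply, hW, Matrix.of_apply] at h2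
    simpa [Matrix.sum_apply, vecMulVec_apply] using h2
  have hres : ∀ w : (Fin N → Fin 2) → ℂ, ∑ a, (star (v a) ⬝ᵥ w) • v a = w := by
    intro w
    have h1 : (∑ a, vecMulVec (v a) (star (v a))) *ᵥ w = w := by
      rw [hcomp, Matrix.one_mulVec]
    rw [sum_mulVecv] at h1
    simp only [vmv_mulVec] at h1
    exact h1
  -- eigen relations
  have hErho : ∀ a (w : (Fin N → Fin 2) → ℂ),
      star (v a) ⬝ᵥ (ρ *ᵥ w) = (lam a : ℂ) * (star (v a) ⬝ᵥ w) := by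
    intro a w
    rw [hdec, sum_mulVecv, dot_sumv]
    have : ∀ b, star (v a) ⬝ᵥ (((lam b : ℂ) • vecMulVec (v b) (star (v b))) *ᵥ w) =
        (if a = b then (1:ℂ) else 0) * ((lam b : ℂ) * (star (v b) ⬝ᵥ w)) := by
      intro b
      rw [Matrix.smul_mulVec, vmv_mulVec]
      rw [dotProduct_smul, dotProduct_smul]
      rw [hortho a b]
      simp [mul_comm, mul_left_comm, smul_eq_mul]
    simp only [this]
    rw [Finset.sum_eq_single a]
    · simp
    · intro b _ hb; simp [Ne.symm hb]
    · simp
  have heig : ∀ b, ρ *ᵥ v b = (lam b : ℂ) • v b := by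
    intro b
    rw [hdec, sum_mulVecv]
    have : ∀ a, ((lam a : ℂ) • vecMulVec (v a) (star (v a))) *ᵥ v b =
        (if a = b then (1:ℂ) else 0) • ((lam a : ℂ) • v a) := by
      intro a
      rw [Matrix.smul_mulVec, vmv_mulVec, hortho a b]
      rw [smul_comm]
    simp only [this]
    rw [Finset.sum_eq_single b]
    · simp
    · intro a _ ha; simp [ha]
    · simp
  have hEmul : ∀ a b (M : Matrix (Fin N → Fin 2) (Fin N → Fin 2) ℂ),
      star (v a) ⬝ᵥ ((M * ρ) *ᵥ v b) = (lam b : ℂ) * (star (v a) ⬝ᵥ (M *ᵥ v b)) := by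
    intro a b M
    rw [← Matrix.mulVec_mulVec, heig b, Matrix.mulVec_smul, dotProduct_smul, smul_eq_mul]
  have hmulE : ∀ a b (M : Matrix (Fin N → Fin 2) (Fin N → Fin 2) ℂ),
      star (v a) ⬝ᵥ ((ρ * M) *ᵥ v b) = (lam a : ℂ) * (star (v a) ⬝ᵥ (M *ᵥ v b)) := by
    intro a b M
    rw [← Matrix.mulVec_mulVec, hErho a]
  -- psi orthonormality
  have hpsio : ∀ j k, j < N / 2 → k < N / 2 →
      star (psiK N j) ⬝ᵥ psiK N k = if j = k then (1:ℂ) else 0 := by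
    intro j k hj hk
    have h1 := psi_diag_psi (d := fun _ => (1:ℂ)) hpos (hkN j hj) (hkN k hk)
    rw [Matrix.diagonal_one, Matrix.one_mulVec] at h1
    rw [h1]
    split <;> norm_num
  -- ρ² = c ρ
  have hrr : ρ * ρ = (c : ℂ) • ρ := by
    rw [hρ]
    unfold rhoN
    simp only [← hc]
    rw [Finset.sum_mul_sum]
    rw [Finset.smul_sum]
    apply Finset.sum_congr rfl
    intro j hj
    rw [Finset.mem_range] at hj
    have : ∀ k ∈ Finset.range (N / 2),
        ((c:ℂ) • vecMulVec (psiK N j) (star (psiK N j))) *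
          ((c:ℂ) • vecMulVec (psiK N k) (star (psiK N k))) =
        (if j = k then (1:ℂ) else 0) •
          (((c:ℂ) * c) • vecMulVec (psiK N j) (star (psiK N k))) := by
      intro k hk
      rw [Finset.mem_range] at hk
      rw [Matrix.smul_mul, Matrix.mul_smul, vmv_mul_vmv, hpsio j k hj hk]
      rw [smul_smul, smul_smul, smul_smul]
      congr 1
      ring
    rw [Finset.sum_congr rfl this]
    rw [Finset.sum_eq_single j]
    · rw [if_pos rfl, one_smul, ← smul_smul]
    · intro k _ hkj; simp [Ne.symm hkj]
    · intro h; exact absurd (Finset.mem_range.mpr hj) h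
  -- eigenvalue quantization
  have hquant : ∀ b, lam b = 0 ∨ lam b = c := by
    intro b
    have h1 : star (v b) ⬝ᵥ ((ρ * ρ) *ᵥ v b) = (lam b : ℂ) * (lam b : ℂ) := by
      rw [hmulE b b ρ, hErho b (v b), hortho b b]
      simp [mul_assoc]
    have h2 : star (v b) ⬝ᵥ ((ρ * ρ) *ᵥ v b) = (c : ℂ) * (lam b : ℂ) := by
      rw [hrr, Matrix.smul_mulVec, dotProduct_smul, smul_eq_mul, hErho b (v b),
        hortho b b]
      simp [mul_assoc]
    have h3 : (lam b : ℂ) * (lam b : ℂ) = (c : ℂ) * (lam b : ℂ) := by rw [← h1, h2]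
    have h4 : lam b * lam b = c * lam b := by exact_mod_cast h3
    have h5 : lam b * (lam b - c) = 0 := by linear_combination h4
    rcases mul_eq_zero.mp h5 with h | h
    · exact Or.inl h
    · right; linarith
  -- Z matrix elements between psi's vanish
  have hZpsi : ∀ j k, j < N / 2 → k < N / 2 →
      star (psiK N j) ⬝ᵥ (Z *ᵥ psiK N k) = 0 := by
    intro j k hj hk
    rw [hZ]
    unfold pauliZTotal
    rw [psi_diag_psi hpos (hkN j hj) (hkN k hk)]
    rw [dz_base (le_of_lt (hkN k hk)), dz_flip (le_of_lt (hkN k hk))]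
    split <;> [skip; rfl]
    ring_nf
  -- Z² sandwich
  have hZZpsi : ∀ k, k < N / 2 →
      star (psiK N k) ⬝ᵥ ((Z * Z) *ᵥ psiK N k) = ((N:ℂ) - 2*k)^2 := by
    intro k hk
    rw [hZ]
    unfold pauliZTotal
    rw [Matrix.diagonal_mul_diagonal]
    rw [psi_diag_psi hpos (hkN k hk) (hkN k hk)]
    rw [if_pos rfl]
    show ((∑ i : Fin N, if baseStr N k i = 0 then (1:ℂ) else -1) *
        (∑ i : Fin N, if baseStr N k i = 0 then (1:ℂ) else -1) +
      (∑ i : Fin N, if flipStr N k i = 0 then (1:ℂ) else -1) *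
        (∑ i : Fin N, if flipStr N k i = 0 then (1:ℂ) else -1)) / 2 = _
    rw [dz_base (le_of_lt (hkN k hk)), dz_flip (le_of_lt (hkN k hk))]
    ring
  -- ρ Z ρ = 0
  have hrZr : ρ * Z * ρ = 0 := by
    rw [hρ]
    unfold rhoN
    simp only [← hc]
    rw [Finset.sum_mul, Finset.sum_mul]
    apply Finset.sum_eq_zero
    intro j hj
    rw [Finset.mem_range] at hj
    rw [Matrix.smul_mul, Matrix.smul_mul, Finset.mul_sum]
    rw [show (∑ k ∈ Finset.range (N/2), vecMulVec (psiK N j) (star (psiK N j)) * Z *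
        ((c:ℂ) • vecMulVec (psiK N k) (star (psiK N k)))) = 0 from ?_, smul_zero]
    apply Finset.sum_eq_zero
    intro k hk
    rw [Finset.mem_range] at hk
    rw [Matrix.mul_smul, vmv_mul, vmv_mul_vmv]
    rw [← Matrix.dotProduct_mulVec]
    rw [hZpsi j k hj hk]
    simp
  -- Z matrix elements vanish between positive-eigenvalue eigenvectors
  have hZab : ∀ a b, lam a = c → lam b = c →
      star (v a) ⬝ᵥ (Z *ᵥ v b) = 0 := by
    intro a b ha hb
    have h1 : star (v a) ⬝ᵥ ((ρ * Z * ρ) *ᵥ v b) = 0 := by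
      rw [hrZr]; simp
    rw [hEmul a b (ρ * Z), hmulE a b Z] at h1
    rw [ha, hb] at h1
    have := mul_eq_zero.mp h1
    rcases this with h | h
    · exact absurd h hcCne
    · rcases mul_eq_zero.mp h with h' | h'
      · exact absurd h' hcCne
      · exact h'
  -- completeness for products of matrix elements
  have hEE : ∀ a b' (M M' : Matrix (Fin N → Fin 2) (Fin N → Fin 2) ℂ),
      ∑ b, (star (v a) ⬝ᵥ (M *ᵥ v b)) * (star (v b) ⬝ᵥ (M' *ᵥ v b')) =
        star (v a) ⬝ᵥ ((M * M') *ᵥ v b') := by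
    intro a b' M M'
    have h1 : ∀ b, (star (v a) ⬝ᵥ (M *ᵥ v b)) * (star (v b) ⬝ᵥ (M' *ᵥ v b')) =
        star (v a) ⬝ᵥ (M *ᵥ ((star (v b) ⬝ᵥ (M' *ᵥ v b')) • v b)) := by
      intro b
      rw [Matrix.mulVec_smul, dotProduct_smul, smul_eq_mul, mul_comm]
    simp only [h1]
    rw [← dot_sumv, ← mulVec_sumv, hres (M' *ᵥ v b'), Matrix.mulVec_mulVec]
  -- hermiticity of Z
  have hZherm : Zᴴ = Z := by
    rw [hZ]
    unfold pauliZTotal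
    rw [Matrix.diagonal_conjTranspose]
    have h : (star fun s : Fin N → Fin 2 => ∑ i : Fin N, if s i = 0 then (1:ℂ) else -1) =
        (fun s => ∑ i : Fin N, if s i = 0 then (1:ℂ) else -1) := by
      funext s
      show star (∑ i : Fin N, if s i = 0 then (1:ℂ) else -1) = _
      rw [star_sum]
      exact Finset.sum_congr rfl fun i _ => by split <;> simp
    rw [h]
  -- conjugates of matrix elements
  have hstarE : ∀ a b, star (star (v a) ⬝ᵥ (Z *ᵥ v b)) = star (v b) ⬝ᵥ (Z *ᵥ v a) := by
    intro a b
    rw [star_dotProduct, star_star, Matrix.star_mulVec, ← Matrix.dotProduct_mulVec, hZherm]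
  -- row sums of |Z_ab|^2
  have hnormSq : ∀ z : ℂ, (Complex.normSq z : ℝ) = (z * star z).re := by
    intro z
    rw [RCLike.star_def, Complex.mul_conj]
    simp
  have hrow : ∀ a, ∑ b, (Complex.normSq (star (v a) ⬝ᵥ (Z *ᵥ v b)) : ℝ) =
      (star (v a) ⬝ᵥ ((Z * Z) *ᵥ v a)).re := by
    intro a
    have h1 : ∀ b, (Complex.normSq (star (v a) ⬝ᵥ (Z *ᵥ v b)) : ℝ) =
        ((star (v a) ⬝ᵥ (Z *ᵥ v b)) * (star (v b) ⬝ᵥ (Z *ᵥ v a))).re := by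
      intro b
      rw [hnormSq, hstarE a b]
    simp only [h1]
    rw [← Complex.re_sum, hEE a a Z Z]
  -- trace formula
  have htr : ∑ a, star (v a) ⬝ᵥ ((ρ * (Z * Z)) *ᵥ v a) =
      ∑ k ∈ Finset.range (N / 2), (c : ℂ) * ((N:ℂ) - 2*k)^2 := by
    have hexp : ρ * (Z * Z) = ∑ k ∈ Finset.range (N / 2),
        (c:ℂ) • vecMulVec (psiK N k) (star (psiK N k) ᵥ* (Z * Z)) := by
      rw [hρ]
      unfold rhoN
      simp only [← hc]
      rw [Finset.sum_mul]
      apply Finset.sum_congr rfl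
      intro k _
      rw [Matrix.smul_mul, vmv_mul]
    rw [hexp]
    have h2 : ∀ a, star (v a) ⬝ᵥ ((∑ k ∈ Finset.range (N / 2),
        (c:ℂ) • vecMulVec (psiK N k) (star (psiK N k) ᵥ* (Z * Z))) *ᵥ v a) =
        ∑ k ∈ Finset.range (N / 2), (c:ℂ) * (((star (psiK N k) ᵥ* (Z * Z)) ⬝ᵥ v a) *
          (star (v a) ⬝ᵥ psiK N k)) := by
      intro a
      rw [sum_mulVecv, dot_sumv]
      apply Finset.sum_congr rfl
      intro k _
      rw [Matrix.smul_mulVec, vmv_mulVec, dotProduct_smul, dotProduct_smul,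
        smul_eq_mul, smul_eq_mul]
    simp only [h2]
    rw [Finset.sum_comm]
    apply Finset.sum_congr rfl
    intro k hk
    rw [Finset.mem_range] at hk
    rw [← Finset.mul_sum]
    congr 1
    have h3 : ∀ a, ((star (psiK N k) ᵥ* (Z * Z)) ⬝ᵥ v a) * (star (v a) ⬝ᵥ psiK N k) =
        (star (psiK N k) ᵥ* (Z * Z)) ⬝ᵥ ((star (v a) ⬝ᵥ psiK N k) • v a) := by
      intro a
      rw [dotProduct_smul, smul_eq_mul, mul_comm]
    simp only [h3]
    rw [← dot_sumv, hres (psiK N k), ← Matrix.dotProduct_mulVec]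
    exact hZZpsi k hk
  -- rewrite each term of the qfi double sum
  have hterm : ∀ a b,
      (if 0 < lam a + lam b then
        (lam a - lam b) ^ 2 / (lam a + lam b) * Complex.normSq (star (v a) ⬝ᵥ (Z *ᵥ v b))
      else 0) =
      (if lam a = c then c * Complex.normSq (star (v a) ⬝ᵥ (Z *ᵥ v b)) else 0) +
      (if lam b = c then c * Complex.normSq (star (v a) ⬝ᵥ (Z *ᵥ v b)) else 0) := by
    intro a b
    rcases hquant a with ha | ha <;> rcases hquant b with hb | hb
    · simp [ha, hb, Ne.symm hcne]
    · have hlt : (0:ℝ) < 0 + c := by simpa using hcpos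
      rw [ha, hb, if_pos hlt, if_neg (show (0:ℝ) ≠ c from Ne.symm hcne), if_pos rfl]
      have he : (0 - c)^2/(0 + c) = c := by field_simp; ring
      rw [he]; ring
    · have hlt : (0:ℝ) < c + 0 := by simpa using hcpos
      rw [ha, hb, if_pos hlt, if_pos rfl, if_neg (show (0:ℝ) ≠ c from Ne.symm hcne)]
      have he : (c - 0)^2/(c + 0) = c := by field_simp; ring
      rw [he]; ring
    · have hz := hZab a b ha hb
      rw [ha, hb, hz]
      simp
  -- assemble
  unfold qfi
  simp only [hterm]
  simp only [Finset.sum_add_distrib]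
  have hS : ∀ (S : Finset (Fin N → Fin 2)) (a : Fin N → Fin 2),
      (∑ b ∈ S, if lam a = c then c * (Complex.normSq (star (v a) ⬝ᵥ (Z *ᵥ v b)) : ℝ) else 0)
      = if lam a = c then c * ∑ b ∈ S, (Complex.normSq (star (v a) ⬝ᵥ (Z *ᵥ v b)) : ℝ) else 0 := by
    intro S a
    split
    · rw [Finset.mul_sum]
    · simp
  have hSA : (∑ a, ∑ b, if lam a = c then
        c * (Complex.normSq (star (v a) ⬝ᵥ (Z *ᵥ v b)) : ℝ) else 0) =
      ∑ a, (if lam a = c then c * (star (v a) ⬝ᵥ ((Z * Z) *ᵥ v a)).re else 0) := by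
    apply Finset.sum_congr rfl
    intro a _
    rw [hS, hrow a]
  have hSB : (∑ a, ∑ b, if lam b = c then
        c * (Complex.normSq (star (v a) ⬝ᵥ (Z *ᵥ v b)) : ℝ) else 0) =
      ∑ b, (if lam b = c then c * (star (v b) ⬝ᵥ ((Z * Z) *ᵥ v b)).re else 0) := by
    rw [Finset.sum_comm]
    apply Finset.sum_congr rfl
    intro b _
    have hswap : ∀ a, (Complex.normSq (star (v a) ⬝ᵥ (Z *ᵥ v b)) : ℝ) =
        Complex.normSq (star (v b) ⬝ᵥ (Z *ᵥ v a)) := by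
      intro a
      rw [← hstarE a b, RCLike.star_def, Complex.normSq_conj]
    by_cases hbc : lam b = c
    · simp only [if_pos hbc]
      rw [← Finset.mul_sum]
      congr 1
      rw [Finset.sum_congr rfl (fun a _ => hswap a), hrow b]
    · simp [hbc]
  rw [hSA, hSB]
  -- evaluate the diagonal sum
  have hSval : (∑ a, (if lam a = c then c * (star (v a) ⬝ᵥ ((Z * Z) *ᵥ v a)).re else 0)) =
      ∑ k ∈ Finset.range (N / 2), c * ((N:ℝ) - 2*k)^2 := by
    have h1 : ∀ a, (if lam a = c then c * (star (v a) ⬝ᵥ ((Z * Z) *ᵥ v a)).re else 0) =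
        ((lam a : ℂ) * (star (v a) ⬝ᵥ ((Z * Z) *ᵥ v a))).re := by
      intro a
      rcases hquant a with h | h
      · rw [if_neg (fun hh => hcne (hh.symm.trans h)), h]
        simp
      · rw [if_pos h, h, Complex.re_ofReal_mul]
    simp only [h1]
    rw [← Complex.re_sum]
    rw [Finset.sum_congr rfl (fun a _ => (hmulE a a (Z * Z)).symm), htr, Complex.re_sum]
    apply Finset.sum_congr rfl
    intro k _
    have h2 : ((N:ℂ) - 2*k)^2 = ((((N:ℝ) - 2*k)^2 : ℝ) : ℂ) := by push_cast; ring
    rw [h2, Complex.re_ofReal_mul, Complex.ofReal_re]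
  rw [hSval]
  -- final arithmetic
  have hmne : (m:ℝ) ≠ 0 := Nat.cast_ne_zero.mpr (by omega)
  have hcast : (N:ℝ) = 2*m := by rw [hNm]; push_cast; ring
  rw [hhalf]
  have hrefl : (∑ k ∈ Finset.range m, c * ((N:ℝ) - 2*k)^2) =
      c * (4 * ((m:ℝ)*((m:ℝ)+1)*(2*(m:ℝ)+1)/6)) := by
    rw [← Finset.mul_sum]
    congr 1
    have h3 : (∑ k ∈ Finset.range m, ((N:ℝ) - 2*k)^2) =
        ∑ j ∈ Finset.range m, (2*(j:ℝ)+2)^2 := by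
      rw [← Finset.sum_range_reflect]
      apply Finset.sum_congr rfl
      intro j hj
      rw [Finset.mem_range] at hj
      have : ((m - 1 - j : ℕ) : ℝ) = (m:ℝ) - 1 - j := by
        have h4 : m - 1 - j = m - (1 + j) := by omega
        rw [h4, Nat.cast_sub (by omega)]
        push_cast; ring
      rw [hcast, this]
      ring
    rw [h3]
    have h5 : ∀ j : ℕ, (2*(j:ℝ)+2)^2 = 4 * ((j:ℝ)+1)^2 := by intro j; ring
    simp only [h5]
    rw [← Finset.mul_sum, sum_sq_aux]
  rw [hrefl, hc, hcast]
  field_simp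
  ring
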